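/- If a word S over alphabet Σ admits a partition into consecutive factors S_1,...,S_t, and for each i the factor S_i contains k pairwise disjoint identical subwords of total length at least (1−δ)|S_i| whenever S_i is ε-regular, and the total length of non-ε-regular factors is at most εn, then S contains k pairwise disjoint identical subwords of total length at least (1−δ−ε)n. -/

import Mathlib

open scoped Classical

/-- The scattered subword of `S` indexed by the set `I`, taken in increasing order. -/
def extract {α : Type*} (S : List α) (I : Finset ℕ) : List α :=
  (I.sort (· ≤ ·)).filterMap (fun i => S[i]?)

/-- `S` has `k` pairwise disjoint identical scattered subwords of length `ℓ` each. -/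
def HasKTuplets {α : Type*} (S : List α) (k ℓ : ℕ) : Prop :=
  ∃ I : Fin k → Finset ℕ, (∀ j, I j ⊆ Finset.range S.length) ∧
    (∀ j j', j ≠ j' → Disjoint (I j) (I j')) ∧ (∀ j, (I j).card = ℓ) ∧
    (∀ j j', extract S (I j) = extract S (I j'))

/-- Density of the letter `q` in a word `T` (0 if `T` is empty). -/
noncomputable def density {α : Type*} [DecidableEq α] (q : α) (T : List α) : ℝ :=
  (T.count q : ℝ) / (T.length : ℝ)

/-- `S` is `ε`-regular with block length `b`. -/
def EpsRegular {α : Type*} [DecidableEq α] (S : List α) (ε : ℝ) (b : ℕ) : Prop :=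
  ∀ q : α, ∀ i : ℕ, b ≤ i → i + 2 * b ≤ S.length →
    |density q S - density q ((S.drop i).take b)| < ε

lemma sort_map_add (I : Finset ℕ) (c : ℕ) :
    ((I.map (addRightEmbedding c)).sort (· ≤ ·)) = (I.sort (· ≤ ·)).map (· + c) := by
  refine (fun hp h1 h2 => List.Perm.eq_of_pairwise' (r := (· ≤ ·)) h1 h2 hp) ?_ ?_ ?_
  · rw [← Multiset.coe_eq_coe, Finset.sort_eq, Finset.map_val, ← Finset.sort_eq I (· ≤ ·),
      Multiset.map_coe]
    rfl
  · exact Finset.pairwise_sort _ _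
  · rw [List.pairwise_map]
    exact (Finset.pairwise_sort I (· ≤ ·)).imp (fun h => by simpa using h)

lemma sort_union_of_lt (J I : Finset ℕ) (h : ∀ a ∈ J, ∀ b ∈ I, a < b) :
    ((J ∪ I).sort (· ≤ ·)) = J.sort (· ≤ ·) ++ I.sort (· ≤ ·) := by
  have hd : Disjoint J I := by
    rw [Finset.disjoint_left]; intro a haJ haI; exact absurd rfl (h a haJ a haI).ne
  refine (fun hp h1 h2 => List.Perm.eq_of_pairwise' (r := (· ≤ ·)) h1 h2 hp) ?_ ?_ ?_
  · rw [← Multiset.coe_eq_coe, Finset.sort_eq, ← Multiset.coe_add, Finset.sort_eq,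
      Finset.sort_eq, ← Finset.disjUnion_eq_union J I hd]
    rfl
  · exact Finset.pairwise_sort _ _
  · rw [List.pairwise_append]
    exact ⟨Finset.pairwise_sort _ _, Finset.pairwise_sort _ _,
      fun a ha b hb => (h a (Finset.mem_sort _ |>.1 ha) b (Finset.mem_sort _ |>.1 hb)).le⟩

lemma extract_append_left {α : Type*} (A B : List α) (J : Finset ℕ)
    (hJ : J ⊆ Finset.range A.length) : extract (A ++ B) J = extract A J := by
  unfold extract
  apply List.filterMap_congr
  intro i hi
  have : i < A.length := Finset.mem_range.1 (hJ ((Finset.mem_sort _).1 hi))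
  rw [List.getElem?_append_left this]

lemma extract_append_shift {α : Type*} (A B : List α) (I : Finset ℕ) :
    extract (A ++ B) (I.map (addRightEmbedding A.length)) = extract B I := by
  unfold extract
  rw [sort_map_add, List.filterMap_map]
  apply List.filterMap_congr
  intro i _
  simp [List.getElem?_append_right (Nat.le_add_left A.length i)]

lemma HasKTuplets.append {α : Type*} {A B : List α} {k L1 L2 : ℕ}
    (h1 : HasKTuplets A k L1) (h2 : HasKTuplets B k L2) :
    HasKTuplets (A ++ B) k (L1 + L2) := by
  obtain ⟨I1, hs1, hd1, hc1, he1⟩ := h1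
  obtain ⟨I2, hs2, hd2, hc2, he2⟩ := h2
  refine ⟨fun j => I1 j ∪ (I2 j).map (addRightEmbedding A.length), ?_, ?_, ?_, ?_⟩
  · intro j x hx
    rw [Finset.mem_range, List.length_append]
    rcases Finset.mem_union.1 hx with hx | hx
    · exact lt_of_lt_of_le (Finset.mem_range.1 (hs1 j hx)) (Nat.le_add_right _ _)
    · obtain ⟨b, hb, rfl⟩ := Finset.mem_map.1 hx
      have := Finset.mem_range.1 (hs2 j hb)
      simp only [addRightEmbedding_apply]
      omega
  · intro j j' hjj
    have key : ∀ jj jj', ∀ x ∈ I1 jj, ∀ y ∈ (I2 jj').map (addRightEmbedding A.length), x ≠ y := by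
      intro jj jj' x hx y hy
      obtain ⟨b, hb, rfl⟩ := Finset.mem_map.1 hy
      have := Finset.mem_range.1 (hs1 jj hx)
      simp only [addRightEmbedding_apply]
      omega
    rw [Finset.disjoint_union_left, Finset.disjoint_union_right, Finset.disjoint_union_right]
    refine ⟨⟨hd1 j j' hjj, ?_⟩, ?_, ?_⟩
    · rw [Finset.disjoint_left]; intro x hx hy; exact key j j' x hx x hy rfl
    · rw [Finset.disjoint_right]; intro x hx hy; exact key j' j x hx x hy rfl
    · rw [Finset.disjoint_left]
      intro x hx hy
      obtain ⟨b, hb, rfl⟩ := Finset.mem_map.1 hx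
      obtain ⟨b', hb', hbe⟩ := Finset.mem_map.1 hy
      simp only [addRightEmbedding_apply] at hbe
      have : b' = b := by omega
      subst this
      exact (Finset.disjoint_left.1 (hd2 j j' hjj)) hb hb'
  · intro j
    rw [Finset.card_union_of_disjoint, Finset.card_map, hc1, hc2]
    rw [Finset.disjoint_left]
    intro x hx hy
    obtain ⟨b, hb, hbe⟩ := Finset.mem_map.1 hy
    have := Finset.mem_range.1 (hs1 j hx)
    simp only [addRightEmbedding_apply] at hbe
    omega
  · intro j j'
    have split : ∀ jj, extract (A ++ B) (I1 jj ∪ (I2 jj).map (addRightEmbedding A.length))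
        = extract A (I1 jj) ++ extract B (I2 jj) := by
      intro jj
      unfold extract
      rw [sort_union_of_lt, List.filterMap_append]
      · exact congrArg₂ (· ++ ·) (extract_append_left A B _ (hs1 jj))
          (extract_append_shift A B (I2 jj))
      · intro a ha b hb
        obtain ⟨b', hb', rfl⟩ := Finset.mem_map.1 hb
        have := Finset.mem_range.1 (hs1 jj ha)
        simp only [addRightEmbedding_apply]
        omega
    rw [split j, split j', he1 j j', he2 j j']

lemma hasKTuplets_zero {α : Type*} (S : List α) (k : ℕ) : HasKTuplets S k 0 :=
  ⟨fun _ => ∅, fun _ => Finset.empty_subset _, fun _ _ _ => Finset.disjoint_empty_left _,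
    fun _ => Finset.card_empty, fun _ _ => rfl⟩

lemma glue_aux {α : Type*} [DecidableEq α] (k : ℕ) (ε δ : ℝ) :
    ∀ P : List (List α), (∀ T ∈ P, EpsRegular T ε ⌈ε * (T.length : ℝ)⌉₊ →
      ∃ L : ℕ, HasKTuplets T k L ∧ (1 - δ) * (T.length : ℝ) ≤ (k : ℝ) * L) →
    ∃ L : ℕ, HasKTuplets P.flatten k L ∧
      (1 - δ) * (P.map (fun T => if EpsRegular T ε ⌈ε * (T.length : ℝ)⌉₊
        then (T.length : ℝ) else 0)).sum ≤ (k : ℝ) * L := by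
  intro P
  induction P with
  | nil => exact fun _ => ⟨0, hasKTuplets_zero _ _, by simp⟩
  | cons T P' ih =>
    intro h
    obtain ⟨L', h1', h2'⟩ := ih (fun T' hT' => h T' (List.mem_cons_of_mem _ hT'))
    by_cases hT : EpsRegular T ε ⌈ε * (T.length : ℝ)⌉₊
    · obtain ⟨LT, hT1, hT2⟩ := h T List.mem_cons_self hT
      refine ⟨LT + L', hT1.append h1', ?_⟩
      simp only [List.map_cons, List.sum_cons, if_pos hT]
      push_cast
      rw [mul_add, mul_add]
      exact add_le_add hT2 h2'
    · refine ⟨0 + L', (hasKTuplets_zero T k).append h1', ?_⟩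
      simp only [List.map_cons, List.sum_cons, if_neg hT, zero_add]
      exact h2'

/-- Gluing step: if a word `S` of length `n` is partitioned into consecutive factors,
the non-`ε`-regular factors have total length at most `ε·n`, and every `ε`-regular
factor `T` contains `k` pairwise disjoint identical subwords of total length at least
`(1-δ)|T|`, then `S` contains `k` pairwise disjoint identical subwords of total
length at least `(1-δ-ε)·n`. -/
theorem glue_ktuplets {α : Type*} [Fintype α] [DecidableEq α]
    (k : ℕ) (ε δ : ℝ) (hε : 0 ≤ ε) (hδ : 0 ≤ δ)
    (S : List α) (P : List (List α)) (hP : P.flatten = S)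
    (hirr : (P.map (fun T =>
        if EpsRegular T ε ⌈ε * (T.length : ℝ)⌉₊ then (0 : ℝ)
        else (T.length : ℝ))).sum ≤ ε * (S.length : ℝ))
    (hreg : ∀ T ∈ P, EpsRegular T ε ⌈ε * (T.length : ℝ)⌉₊ →
      ∃ L : ℕ, HasKTuplets T k L ∧ (1 - δ) * (T.length : ℝ) ≤ (k : ℝ) * L) :
    ∃ L : ℕ, HasKTuplets S k L ∧
      (1 - δ - ε) * (S.length : ℝ) ≤ (k : ℝ) * L := by
  subst hP
  obtain ⟨L, hL, hb⟩ := glue_aux k ε δ P hreg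
  refine ⟨L, hL, ?_⟩
  set R := (P.map (fun T => if EpsRegular T ε ⌈ε * (T.length : ℝ)⌉₊
    then (T.length : ℝ) else 0)).sum with hR
  set Ir := (P.map (fun T => if EpsRegular T ε ⌈ε * (T.length : ℝ)⌉₊ then (0 : ℝ)
    else (T.length : ℝ))).sum with hIr
  have hsum : R + Ir = (P.flatten.length : ℝ) := by
    rw [hR, hIr, ← List.sum_map_add, List.length_flatten]
    push_cast
    rw [List.map_map]
    congr 1
    apply List.map_congr_left
    intro T _
    by_cases hT : EpsRegular T ε ⌈ε * (T.length : ℝ)⌉₊ <;> simp [hT]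
  have hIr0 : 0 ≤ Ir := List.sum_nonneg (by
    intro x hx
    obtain ⟨T, _, rfl⟩ := List.mem_map.1 hx
    positivity)
  have hR0 : 0 ≤ R := List.sum_nonneg (by
    intro x hx
    obtain ⟨T, _, rfl⟩ := List.mem_map.1 hx
    positivity)
  nlinarith [mul_nonneg hδ hIr0]
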